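/- For every x ∈ ℝ^n, the Jacobian matrix (dF/dx)(x) is diagonalizable over ℝ: there exist an invertible matrix Q ∈ ℝ^{n×n} and a diagonal matrix D ∈ ℝ^{n×n} such that (dF/dx)(x) = Q D Q^{-1}. -/

import Mathlib

open Finset Matrix

lemma symmDiag {n : ℕ} (N : Matrix (Fin n) (Fin n) ℝ) (hN : N.IsHermitian) :
    ∃ (Q : Matrix (Fin n) (Fin n) ℝ) (d : Fin n → ℝ),
      IsUnit Q.det ∧ N = Q * Matrix.diagonal d * Q⁻¹ := by
  set U : Matrix (Fin n) (Fin n) ℝ := (hN.eigenvectorUnitary : Matrix (Fin n) (Fin n) ℝ)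
  have hU1 : U * star U = 1 := (Matrix.mem_unitaryGroup_iff).mp hN.eigenvectorUnitary.2
  have hUinv : U⁻¹ = star U := Matrix.inv_eq_right_inv hU1
  refine ⟨U, hN.eigenvalues, Matrix.isUnit_det_of_right_inverse hU1, ?_⟩
  have := hN.spectral_theorem
  rw [hUinv]
  simpa [RCLike.ofReal_real_eq_id] using this

lemma diagConjDiag {n : ℕ} (A B : Fin n → ℝ) (hA : ∀ i, 0 < A i) (hB : ∀ i, 0 < B i)
    (M : Matrix (Fin n) (Fin n) ℝ) (hM : Mᵀ = M) :
    ∃ (Q : Matrix (Fin n) (Fin n) ℝ) (d : Fin n → ℝ),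
      IsUnit Q.det ∧ diagonal A * M * diagonal B = Q * Matrix.diagonal d * Q⁻¹ := by
  set p : Fin n → ℝ := fun i => Real.sqrt (A i / B i) with hp
  set g : Fin n → ℝ := fun i => Real.sqrt (A i * B i) with hg
  have hppos : ∀ i, 0 < p i := fun i => Real.sqrt_pos.mpr (div_pos (hA i) (hB i))
  have hpg : ∀ i, p i * g i = A i := by
    intro i
    have h1 : A i / B i * (A i * B i) = (A i) ^ 2 := by
      have hb := (hB i).ne'
      field_simp
    rw [hp, hg, ← Real.sqrt_mul (div_pos (hA i) (hB i)).le, h1, Real.sqrt_sq (hA i).le]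
  have hgpinv : ∀ i, g i * (p i)⁻¹ = B i := by
    intro i
    have h1 : A i * B i * (A i / B i)⁻¹ = (B i) ^ 2 := by
      have hb := (hB i).ne'
      have ha := (hA i).ne'
      field_simp
    rw [hg, hp, ← Real.sqrt_inv, ← Real.sqrt_mul (mul_pos (hA i) (hB i)).le, h1,
      Real.sqrt_sq (hB i).le]
  set N : Matrix (Fin n) (Fin n) ℝ := diagonal g * M * diagonal g with hN
  have hNh : N.IsHermitian := by
    have hT : Nᵀ = N := by
      rw [hN, Matrix.transpose_mul, Matrix.transpose_mul, Matrix.diagonal_transpose, hM, mul_assoc]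
    show Nᴴ = N
    rw [Matrix.conjTranspose_eq_transpose_of_trivial]
    exact hT
  obtain ⟨Q, d, hQ, hQN⟩ := symmDiag N hNh
  have hPinv : (diagonal p)⁻¹ = diagonal (fun i => (p i)⁻¹) := by
    apply Matrix.inv_eq_right_inv
    rw [Matrix.diagonal_mul_diagonal]
    convert Matrix.diagonal_one with i
    exact mul_inv_cancel₀ (hppos i).ne'
  have hpgd : diagonal p * diagonal g = diagonal A := by
    rw [Matrix.diagonal_mul_diagonal]
    exact congrArg _ (funext hpg)
  have hgpd : diagonal g * diagonal (fun i => (p i)⁻¹) = diagonal B := by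
    rw [Matrix.diagonal_mul_diagonal]
    exact congrArg _ (funext hgpinv)
  refine ⟨diagonal p * Q, d, ?_, ?_⟩
  · rw [Matrix.det_mul, Matrix.det_diagonal]
    exact (isUnit_iff_ne_zero.mpr (Finset.prod_pos (fun i _ => hppos i)).ne').mul hQ
  · rw [Matrix.mul_inv_rev, hPinv]
    calc diagonal A * M * diagonal B
        = (diagonal p * diagonal g) * M * (diagonal g * diagonal (fun i => (p i)⁻¹)) := by
          rw [hpgd, hgpd]
      _ = diagonal p * N * diagonal (fun i => (p i)⁻¹) := by
          rw [hN]; simp only [Matrix.mul_assoc]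
      _ = diagonal p * (Q * diagonal d * Q⁻¹) * diagonal (fun i => (p i)⁻¹) := by rw [← hQN]
      _ = diagonal p * Q * diagonal d * (Q⁻¹ * diagonal (fun i => (p i)⁻¹)) := by
          simp only [Matrix.mul_assoc]


/-- The Jacobian of the Sinkhorn map `F` is diagonalizable over `ℝ`: there exist an
invertible `Q` and a diagonal matrix `D` with `(dF/dx)(x) = Q D Q⁻¹`. -/
theorem sinkhorn_jacobian_diagonalizable
    (n m : ℕ) (hn : 0 < n) (hm : 0 < m)
    (a : Fin n → ℝ) (b : Fin m → ℝ) (K : Matrix (Fin n) (Fin m) ℝ)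
    (ha_pos : ∀ i, 0 < a i) (ha_sum : ∑ i, a i = 1)
    (hb_pos : ∀ j, 0 < b j) (hb_sum : ∑ j, b j = 1)
    (hK_pos : ∀ i j, 0 < K i j)
    (F : (Fin n → ℝ) → Fin n → ℝ)
    (hF : ∀ x i, F x i = Real.log (a i) -
      Real.log (∑ j, K i j * (b j / ∑ i', K i' j * Real.exp (x i'))))
    (J : (Fin n → ℝ) → Matrix (Fin n) (Fin n) ℝ)
    (hJ : ∀ x j i, J x j i = fderiv ℝ F x (Pi.single i 1) j) :
    ∀ x : Fin n → ℝ, ∃ (Q : Matrix (Fin n) (Fin n) ℝ) (d : Fin n → ℝ),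
      IsUnit Q.det ∧ J x = Q * Matrix.diagonal d * Q⁻¹ := by
  haveI : Nonempty (Fin n) := ⟨⟨0, hn⟩⟩
  haveI : Nonempty (Fin m) := ⟨⟨0, hm⟩⟩
  intro x
  -- the column sums
  set c : Fin m → ℝ := fun l => ∑ i', K i' l * Real.exp (x i') with hc
  have hc_pos : ∀ l, 0 < c l := fun l =>
    Finset.sum_pos (fun i' _ => mul_pos (hK_pos i' l) (Real.exp_pos _)) Finset.univ_nonempty
  set S : Fin n → ℝ := fun j => ∑ l, K j l * (b l * (c l)⁻¹) with hS
  have hS_pos : ∀ j, 0 < S j := fun j =>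
    Finset.sum_pos (fun l _ => mul_pos (hK_pos j l) (mul_pos (hb_pos l) (inv_pos.mpr (hc_pos l))))
      Finset.univ_nonempty
  -- derivative of c l
  set Lc : Fin m → ((Fin n → ℝ) →L[ℝ] ℝ) :=
    fun l => ∑ i', (K i' l * Real.exp (x i')) • (ContinuousLinearMap.proj i') with hLcdef
  have hLc : ∀ l, HasFDerivAt (fun y : Fin n → ℝ => ∑ i', K i' l * Real.exp (y i')) (Lc l) x := by
    intro l
    apply HasFDerivAt.fun_sum
    intro i' _
    have h1 : HasFDerivAt (fun y : Fin n → ℝ => y i')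
        (ContinuousLinearMap.proj i' : (Fin n → ℝ) →L[ℝ] ℝ) x := hasFDerivAt_apply i' x
    have h2 := h1.exp.const_mul (K i' l)
    rw [smul_smul] at h2
    exact h2
  -- derivative of the inner sum S j
  set dS : Fin n → ((Fin n → ℝ) →L[ℝ] ℝ) :=
    fun j => ∑ l, (K j l) • ((b l) • ((-((c l) ^ 2)⁻¹) • Lc l)) with hdSdef
  have hdS : ∀ j, HasFDerivAt
      (fun y : Fin n → ℝ => ∑ l, K j l * (b l * (∑ i', K i' l * Real.exp (y i'))⁻¹)) (dS j) x := by
    intro j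
    apply HasFDerivAt.fun_sum
    intro l _
    exact (((hasDerivAt_inv (hc_pos l).ne').comp_hasFDerivAt x (hLc l)).const_mul
      (b l)).const_mul (K j l)
  -- full derivative of F
  set Φ' : (Fin n → ℝ) →L[ℝ] (Fin n → ℝ) :=
    ContinuousLinearMap.pi (fun j => (0 : (Fin n → ℝ) →L[ℝ] ℝ) - (S j)⁻¹ • dS j) with hΦ'
  have hFeq : F = fun y j => Real.log (a j) -
      Real.log (∑ l, K j l * (b l * (∑ i', K i' l * Real.exp (y i'))⁻¹)) := by
    funext y j
    rw [hF y j]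
    simp [div_eq_mul_inv]
  have hFd : HasFDerivAt F Φ' x := by
    rw [hFeq, hΦ']
    apply hasFDerivAt_pi.2
    intro j
    exact (hasFDerivAt_const (Real.log (a j)) x).sub (((hdS j).log (hS_pos j).ne'))
  have hfd : fderiv ℝ F x = Φ' := hFd.fderiv
  -- the matrices
  set M : Matrix (Fin n) (Fin n) ℝ := fun j i => ∑ l, K j l * K i l * (b l / (c l) ^ 2) with hM
  have hMT : Mᵀ = M := by
    ext j i
    rw [Matrix.transpose_apply]
    simp only [Matrix.transpose_apply, hM]
    exact Finset.sum_congr rfl fun l _ => by ring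
  have hLcapp : ∀ l (i : Fin n), Lc l (Pi.single i 1) = K i l * Real.exp (x i) := by
    intro l i
    rw [hLcdef]
    simp only [ContinuousLinearMap.coe_sum', Finset.sum_apply, ContinuousLinearMap.coe_smul',
      Pi.smul_apply, ContinuousLinearMap.proj_apply, smul_eq_mul]
    rw [Finset.sum_eq_single i]
    · simp
    · intro i' _ hne
      simp [Pi.single_apply, hne]
    · simp
  have hJeq : J x = diagonal (fun j => (S j)⁻¹) * M * diagonal (fun i => Real.exp (x i)) := by
    ext j i
    have hR : (diagonal (fun j => (S j)⁻¹) * M * diagonal fun i => Real.exp (x i)) j i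
        = (S j)⁻¹ * M j i * Real.exp (x i) := by
      rw [Matrix.mul_diagonal, Matrix.diagonal_mul]
    rw [hJ x j i, hfd, hΦ', hR]
    simp only [ContinuousLinearMap.pi_apply, ContinuousLinearMap.sub_apply,
      ContinuousLinearMap.zero_apply, zero_sub, ContinuousLinearMap.neg_apply,
      ContinuousLinearMap.smul_apply, ContinuousLinearMap.sum_apply, smul_eq_mul,
      hdSdef, hLcapp]
    rw [hM]
    show _ = (S j)⁻¹ * (∑ l, K j l * K i l * (b l / c l ^ 2)) * Real.exp (x i)
    rw [Finset.mul_sum, Finset.mul_sum, Finset.sum_mul, ← Finset.sum_neg_distrib]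
    exact Finset.sum_congr rfl fun l _ => by ring
  obtain ⟨Q, d, hQ, hQD⟩ := diagConjDiag (fun j => (S j)⁻¹) (fun i => Real.exp (x i))
    (fun j => inv_pos.mpr (hS_pos j)) (fun i => Real.exp_pos _) M hMT
  exact ⟨Q, d, hQ, by rw [hJeq, hQD]⟩
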